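/- arXiv:2405.19516 — 2 statements merged into one kernel-verified Lean document; each statement's English description precedes it below -/
import Mathlib

section
/- Let r, v, t, ω, θ_v, θ_n, R be real numbers with r ≥ 0 and v·t ≥ 0, and set A = R − r·cos(ωt − θ_n) − v·t·cos(θ_v − θ_n). Assume A > 0. Let p = (r·cos(ωt) + v·t·cos θ_v, r·sin(ωt) + v·t·sin θ_v) and q = (R·cos θ_n, R·sin θ_n) in ℝ². Then A ≤ ‖p − q‖ ≤ A + (r + v·t)²/(2A). -/
theorem stmt_6 (r v t ω θ_v θ_n R : ℝ) (hr : r ≥ 0) (hvt : v * t ≥ 0)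
    (A : ℝ)
    (hA : A = R - r * Real.cos (ω * t - θ_n) - v * t * Real.cos (θ_v - θ_n))
    (hApos : A > 0) :
    let p : EuclideanSpace ℝ (Fin 2) :=
      !₂[r * Real.cos (ω * t) + v * t * Real.cos θ_v,
        r * Real.sin (ω * t) + v * t * Real.sin θ_v]
    let q : EuclideanSpace ℝ (Fin 2) := !₂[R * Real.cos θ_n, R * Real.sin θ_n]
    A ≤ ‖p - q‖ ∧ ‖p - q‖ ≤ A + (r + v * t) ^ 2 / (2 * A) := by
  intro p q
  set X : ℝ := r * Real.sin (ω * t - θ_n) + v * t * Real.sin (θ_v - θ_n) with hX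
  have h3 : Real.sin θ_n ^ 2 + Real.cos θ_n ^ 2 = 1 := Real.sin_sq_add_cos_sq _
  have key : ‖p - q‖ = Real.sqrt (A ^ 2 + X ^ 2) := by
    simp only [p, q, EuclideanSpace.norm_eq, Fin.sum_univ_two]
    congr 1
    simp only [PiLp.sub_apply, PiLp.toLp_apply, Matrix.cons_val_zero, Matrix.cons_val_one, Matrix.head_cons,
      Real.norm_eq_abs, sq_abs]
    rw [hA, hX, Real.cos_sub, Real.sin_sub, Real.cos_sub, Real.sin_sub]
    linear_combination (R ^ 2
        - r ^ 2 * (Real.cos (ω * t) ^ 2 + Real.sin (ω * t) ^ 2)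
        - (v * t) ^ 2 * (Real.cos θ_v ^ 2 + Real.sin θ_v ^ 2)
        - 2 * r * (v * t) * (Real.cos (ω * t) * Real.cos θ_v
            + Real.sin (ω * t) * Real.sin θ_v)) * h3
  have hXle : X ^ 2 ≤ (r + v * t) ^ 2 := by
    have habs : |X| ≤ r + v * t := by
      calc |X| ≤ |r * Real.sin (ω * t - θ_n)| + |v * t * Real.sin (θ_v - θ_n)| := abs_add_le _ _
        _ = r * |Real.sin (ω * t - θ_n)| + v * t * |Real.sin (θ_v - θ_n)| := by
            rw [abs_mul, abs_mul, abs_of_nonneg hr, abs_of_nonneg hvt]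
        _ ≤ r * 1 + v * t * 1 := by
            gcongr
            · exact Real.abs_sin_le_one _
            · exact Real.abs_sin_le_one _
        _ = r + v * t := by ring
    have := abs_le.mp habs
    nlinarith [this.1, this.2]
  constructor
  · rw [key]
    have : A = Real.sqrt (A ^ 2) := by rw [Real.sqrt_sq hApos.le]
    rw [this]
    exact Real.sqrt_le_sqrt (by nlinarith [sq_nonneg X])
  · rw [key]
    set k : ℝ := (r + v * t) ^ 2 / (2 * A) with hk
    have hk0 : k ≥ 0 := by positivity
    have h2Ak : 2 * A * k = (r + v * t) ^ 2 := by
      rw [hk]; field_simp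
    rw [show A + k = Real.sqrt ((A + k) ^ 2) from (Real.sqrt_sq (by linarith)).symm]
    apply Real.sqrt_le_sqrt
    nlinarith [hXle, sq_nonneg k, h2Ak]
end

section
/- Let A and T be finite index sets, S : A × T → ℂ, h : A → ℝ, τ : T → ℝ, and let κ, r, ω, φ, θ_d, v₁, v₂ be real numbers. Let d = (cos φ·cos θ_d, cos φ·sin θ_d, sin φ) ∈ ℝ³, and for a ∈ A, t ∈ T let p(a,t) = (r·cos(ω·τ(t)), r·sin(ω·τ(t)), h(a)) ∈ ℝ³ and v = (v₁, v₂, 0) ∈ ℝ³. Then ∑_{a∈A} ∑_{t∈T} S(a,t)·exp(i·κ·⟪d, p(a,t) + τ(t)·v⟫) = ∑_{t∈T} (∑_{a∈A} S(a,t)·exp(i·κ·h(a)·sin φ)) · exp(i·κ·⟪d′, p′(t) + τ(t)·v′⟫), where d′ = (cos φ·cos θ_d, cos φ·sin θ_d) ∈ ℝ², p′(t) = (r·cos(ω·τ(t)), r·sin(ω·τ(t))) ∈ ℝ², v′ = (v₁, v₂) ∈ ℝ², and ⟪·,·⟫ denotes the Euclidean inner product. -/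
open RealInnerProductSpace

theorem stmt_13 (A T : Type*) [Fintype A] [Fintype T]
    (S : A × T → ℂ) (h : A → ℝ) (τ : T → ℝ)
    (κ r ω φ θ_d v₁ v₂ : ℝ) :
    let d : EuclideanSpace ℝ (Fin 3) :=
      !₂[Real.cos φ * Real.cos θ_d, Real.cos φ * Real.sin θ_d, Real.sin φ]
    let p : A → T → EuclideanSpace ℝ (Fin 3) := fun a t =>
      !₂[r * Real.cos (ω * τ t), r * Real.sin (ω * τ t), h a]
    let v : EuclideanSpace ℝ (Fin 3) := !₂[v₁, v₂, 0]
    let d' : EuclideanSpace ℝ (Fin 2) :=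
      !₂[Real.cos φ * Real.cos θ_d, Real.cos φ * Real.sin θ_d]
    let p' : T → EuclideanSpace ℝ (Fin 2) := fun t =>
      !₂[r * Real.cos (ω * τ t), r * Real.sin (ω * τ t)]
    let v' : EuclideanSpace ℝ (Fin 2) := !₂[v₁, v₂]
    ∑ a : A, ∑ t : T,
        S (a, t) * Complex.exp (Complex.I * κ * ⟪d, p a t + τ t • v⟫) =
      ∑ t : T,
        (∑ a : A, S (a, t) * Complex.exp (Complex.I * κ * (h a * Real.sin φ))) *
          Complex.exp (Complex.I * κ * ⟪d', p' t + τ t • v'⟫) := by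
  intro d p v d' p' v'
  rw [Finset.sum_comm]
  refine Finset.sum_congr rfl fun t _ => ?_
  rw [Finset.sum_mul]
  refine Finset.sum_congr rfl fun a _ => ?_
  have h3 : ⟪d, p a t + τ t • v⟫ = h a * Real.sin φ + ⟪d', p' t + τ t • v'⟫ := by
    simp [d, p, v, d', p', v', EuclideanSpace.inner_eq_star_dotProduct]
    ring
  rw [h3]
  push_cast
  rw [mul_add (Complex.I * κ), Complex.exp_add]
  ring
end
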